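/- Let F be a non-expansive operator on a real Hilbert space with Fix(F) ≠ ∅, and let the Halpern iteration be u^{k+1} = (1/(k+2)) u⁰ + (1 - 1/(k+2)) F(u^k) for k ≥ 0 starting from u⁰. Then for all k ≥ 0 and any u* ∈ Fix(F), the fixed-point residual satisfies ‖u^k - F(u^k)‖ ≤ 2‖u⁰ - u*‖/(k + 1). -/
import Mathlib


open scoped RealInnerProductSpace

lemma coco {H : Type*} [NormedAddCommGroup H] [InnerProductSpace ℝ H]
    (F : H → H) (hF : ∀ x y : H, ‖F x - F y‖ ≤ ‖x - y‖) (x y : H) :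
    ‖(x - F x) - (y - F y)‖^2 ≤ 2 * ⟪(x - F x) - (y - F y), x - y⟫ := by
  have h := hF x y
  have h2 : ‖F x - F y‖^2 ≤ ‖x - y‖^2 := by
    have := norm_nonneg (F x - F y); nlinarith
  have e : F x - F y = (x - y) - ((x - F x) - (y - F y)) := by abel
  rw [e, norm_sub_sq_real] at h2
  have hc := real_inner_comm (x - y) ((x - F x) - (y - F y))
  linarith


/-- Halpern iteration with stepsizes `1/(k+2)`: the fixed-point residual satisfies
`‖u^k - F(u^k)‖ ≤ 2 ‖u⁰ - u*‖ / (k+1)` for every fixed point `u*` of the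
non-expansive operator `F`. -/
theorem halpern_residual_rate
    {H : Type*} [NormedAddCommGroup H] [InnerProductSpace ℝ H] [CompleteSpace H]
    (F : H → H) (hF : ∀ x y : H, ‖F x - F y‖ ≤ ‖x - y‖)
    (u : ℕ → H)
    (hrec : ∀ k : ℕ,
      u (k + 1) = (1 / (k + 2 : ℝ)) • u 0 + (1 - 1 / (k + 2 : ℝ)) • F (u k))
    (ustar : H) (hstar : F ustar = ustar) :
    ∀ k : ℕ, ‖u k - F (u k)‖ ≤ 2 * ‖u 0 - ustar‖ / (k + 1 : ℝ) := by
  have W : ∀ k : ℕ, ((k:ℝ)*((k:ℝ)+1)/2) * ‖u k - F (u k)‖^2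
      + ((k:ℝ)+1) * ⟪u k - F (u k), u k - u 0⟫ ≤ 0 := by
    intro k
    induction k with
    | zero => simp
    | succ k ih =>
      set r := u k - F (u k) with hr
      set q := u (k+1) - F (u (k+1)) with hq
      set s := u k - u 0 with hs
      have hk2 : ((k:ℝ)+2) ≠ 0 := by positivity
      have hd : u (k+1) - u k
          = (-(1/((k:ℝ)+2))) • s - (1 - 1/((k:ℝ)+2)) • r := by
        rw [hrec k, hr, hs]; module
      have hd0 : u (k+1) - u 0
          = (1 - 1/((k:ℝ)+2)) • s - (1 - 1/((k:ℝ)+2)) • r := by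
        rw [hrec k, hr, hs]; module
      clear_value r q s
      have hN := coco F hF (u (k+1)) (u k)
      rw [← hq, ← hr] at hN
      have hip : ⟪q - r, u (k+1) - u k⟫
          = -(1/((k:ℝ)+2))*(⟪q,s⟫ - ⟪r,s⟫)
            - (1 - 1/((k:ℝ)+2))*(⟪q,r⟫ - ‖r‖^2) := by
        rw [hd]
        simp only [inner_sub_left, inner_sub_right, real_inner_smul_right,
          inner_neg_neg, real_inner_self_eq_norm_sq]
        ring
      have hT : ⟪q, u (k+1) - u 0⟫
          = (1 - 1/((k:ℝ)+2))*⟪q,s⟫ - (1 - 1/((k:ℝ)+2))*⟪q,r⟫ := by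
        rw [hd0]
        simp only [inner_sub_right, real_inner_smul_right]
      have hqr : ‖q - r‖^2 = ‖q‖^2 - 2*⟪q,r⟫ + ‖r‖^2 := norm_sub_sq_real q r
      have hNpos : 0 ≤ 2*⟪q - r, u (k+1) - u k⟫ - ‖q - r‖^2 := by linarith
      have key : (((k:ℝ)+1)*((k:ℝ)+2)/2) * ‖q‖^2 + ((k:ℝ)+2) * ⟪q, u (k+1) - u 0⟫
          = ((k:ℝ)*((k:ℝ)+1)/2 * ‖r‖^2 + ((k:ℝ)+1)*⟪r,s⟫)
            - (((k:ℝ)+1)*((k:ℝ)+2)/2)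
              * (2*⟪q - r, u (k+1) - u k⟫ - ‖q - r‖^2) := by
        rw [hip, hT, hqr]
        field_simp
        ring
      have h2 : 0 ≤ (((k:ℝ)+1)*((k:ℝ)+2)/2)
          * (2*⟪q - r, u (k+1) - u k⟫ - ‖q - r‖^2) := by
        apply mul_nonneg (by positivity) hNpos
      have hW' : (((k:ℝ)+1)*((k:ℝ)+2)/2) * ‖q‖^2
          + ((k:ℝ)+2) * ⟪q, u (k+1) - u 0⟫ ≤ 0 := by
        rw [key]; linarith
      push_cast
      linarith [hW']
  intro k
  set r := u k - F (u k) with hr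
  have hstar2 : ‖r‖^2 ≤ 2 * ⟪r, u k - ustar⟫ := by
    have h := coco F hF (u k) ustar
    rw [hstar, sub_self, sub_zero, ← hr] at h
    linarith
  have hsplit : ⟪r, u k - u 0⟫ = ⟪r, u k - ustar⟫ - ⟪r, u 0 - ustar⟫ := by
    rw [← inner_sub_right]; congr 1; abel
  have hW := W k
  rw [← hr, hsplit] at hW
  have hCS : ⟪r, u 0 - ustar⟫ ≤ ‖r‖ * ‖u 0 - ustar‖ := real_inner_le_norm r _
  have hk1 : (0:ℝ) < (k:ℝ) + 1 := by positivity
  rw [le_div_iff₀ hk1]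
  nlinarith [norm_nonneg r, norm_nonneg (u 0 - ustar), hW, hstar2, hCS, hk1]
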